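/- Let a₊, a₋ ∈ (0,2)\{1}, let C₊, C₋, λ₊, λ₋, μ₊, μ₋ > 0 and T > 0. Define r : ℝ → ℝ by r(x) = exp(−(λ₊−μ₊)x) for x > 0 and r(x) = exp(−(λ₋−μ₋)|x|) for x < 0, and let ℓ̃ be the GTS Lévy density with parameters (a₊, a₋, C₊, C₋, μ₊, μ₋). Then the function x ↦ (r(x)·log r(x) − r(x) + 1)·ℓ̃(x) is integrable on ℝ and T·∫_ℝ (r(x)·log r(x) − r(x) + 1)·ℓ̃(x) dx = T·C₊·Γ(−a₊)·((a₊−1)·λ₊^{a₊} − a₊·μ₊·λ₊^{a₊−1} + μ₊^{a₊}) + T·C₋·Γ(−a₋)·((a₋−1)·λ₋^{a₋} − a₋·μ₋·λ₋^{a₋−1} + μ₋^{a₋}). -/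

import Mathlib

open MeasureTheory Real Set
open Filter Topology


lemma aux_one_sub_exp_le (u : ℝ) : 1 - exp (-u) ≤ u := by nlinarith [add_one_le_exp (-u)]
lemma aux_exp_sub_nonneg (u : ℝ) : 0 ≤ exp (-u) - 1 + u := by nlinarith [add_one_le_exp (-u)]
lemma aux_one_sub_exp_nonneg {u : ℝ} (hu : 0 ≤ u) : 0 ≤ 1 - exp (-u) := by
  nlinarith [Real.exp_le_one_iff.mpr (neg_nonpos.mpr hu)]
lemma aux_exp_sub_le {u : ℝ} (hu : 0 ≤ u) : exp (-u) - 1 + u ≤ u := by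
  nlinarith [Real.exp_le_one_iff.mpr (neg_nonpos.mpr hu)]

lemma aux_exp_quad {u : ℝ} (hu : 0 ≤ u) : exp (-u) - 1 + u ≤ u ^ 2 / 2 := by
  have hderiv : ∀ w : ℝ, HasDerivAt (fun u : ℝ => u ^ 2 / 2 - exp (-u) + 1 - u)
      (w + exp (-w) - 1) w := by
    intro w
    have h1 : HasDerivAt (fun u : ℝ => exp (-u)) (-exp (-w)) w := by
      exact ((Real.hasDerivAt_exp (-w)).comp w (hasDerivAt_neg w)).congr_deriv (by simp)
    have h2 : HasDerivAt (fun u : ℝ => u ^ 2 / 2) w w := by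
      simpa using ((hasDerivAt_pow 2 w).div_const 2)
    have := ((h2.sub h1).add_const 1).sub (hasDerivAt_id w)
    exact this.congr_deriv (by ring)
  have hmono : MonotoneOn (fun u : ℝ => u ^ 2 / 2 - exp (-u) + 1 - u) (Ici 0) := by
    apply monotoneOn_of_deriv_nonneg (convex_Ici 0)
    · exact (Continuous.continuousOn (by continuity))
    · intro x hx
      exact (hderiv x).differentiableAt.differentiableWithinAt
    · intro x hx
      rw [(hderiv x).deriv]
      nlinarith [add_one_le_exp (-x)]
  have h0 := hmono (mem_Ici.mpr le_rfl) hu hu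
  simp only [neg_zero, Real.exp_zero] at h0
  nlinarith [h0]

lemma integrableOn_Ioc_rpow {p : ℝ} (hp : -1 < p) :
    IntegrableOn (fun x : ℝ => x ^ p) (Ioc 0 1) := by
  have := intervalIntegral.intervalIntegrable_rpow' (a := (0:ℝ)) (b := 1) hp
  rwa [intervalIntegrable_iff_integrableOn_Ioc_of_le zero_le_one] at this

lemma integrableOn_Ioi_of_bounds {g : ℝ → ℝ} (hg : ContinuousOn g (Ioi 0))
    {C1 C2 p q : ℝ} (hp : -1 < p) (hq : q < -1)
    (h1 : ∀ x : ℝ, 0 < x → x ≤ 1 → |g x| ≤ C1 * x ^ p)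
    (h2 : ∀ x : ℝ, 1 ≤ x → |g x| ≤ C2 * x ^ q) :
    IntegrableOn g (Ioi 0) := by
  rw [← Ioc_union_Ioi_eq_Ioi (zero_le_one (α := ℝ))]
  apply IntegrableOn.union
  · refine Integrable.mono' ((integrableOn_Ioc_rpow hp).const_mul C1)
      ((hg.mono Ioc_subset_Ioi_self).aestronglyMeasurable measurableSet_Ioc) ?_
    filter_upwards [ae_restrict_mem measurableSet_Ioc] with x hx
    simpa using h1 x hx.1 hx.2
  · refine Integrable.mono' ((integrableOn_Ioi_rpow_of_lt hq one_pos).const_mul C2)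
      ((hg.mono (Ioi_subset_Ioi zero_le_one)).aestronglyMeasurable measurableSet_Ioi) ?_
    filter_upwards [ae_restrict_mem measurableSet_Ioi] with x hx
    simpa using h2 x hx.le

lemma gammaIntegrable {s θ : ℝ} (hs : 0 < s) (hθ : 0 < θ) :
    IntegrableOn (fun x : ℝ => x ^ (s - 1) * exp (-(θ * x))) (Ioi 0) := by
  have h := integrableOn_rpow_mul_exp_neg_mul_rpow (p := 1) (s := s - 1) (b := θ)
    (by linarith) one_pos hθ
  refine h.congr_fun (fun x hx => ?_) measurableSet_Ioi
  beta_reduce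
  rw [Real.rpow_one, neg_mul]

lemma gammaIntegral {s θ : ℝ} (hs : 0 < s) (hθ : 0 < θ) :
    ∫ x in Ioi (0:ℝ), x ^ (s - 1) * exp (-(θ * x)) = Gamma s * θ ^ (-s) := by
  rw [integral_rpow_mul_exp_neg_mul_Ioi hs hθ, one_div, ← Real.rpow_neg_one,
    ← Real.rpow_mul hθ.le, neg_one_mul, mul_comm]

lemma tendsto_rpow_nhdsWithin_zero {e : ℝ} (he : 0 < e) :
    Tendsto (fun x : ℝ => x ^ e) (nhdsWithin 0 (Ici 0)) (𝓝 0) := by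
  have h : ContinuousAt (fun x : ℝ => x ^ e) 0 :=
    Real.continuousAt_rpow_const 0 e (Or.inr he.le)
  have := h.continuousWithinAt (s := Ici 0)
  simpa [ContinuousWithinAt, Real.zero_rpow he.ne'] using this

lemma ibp_Ioi {φ dφ : ℝ → ℝ} {c : ℝ}
    (hφ : ∀ x : ℝ, HasDerivAt φ (dφ x) x) (hφ0 : φ 0 = 0)
    (hcont0 : Tendsto (fun x => φ x * x ^ c) (nhdsWithin 0 (Ici 0)) (𝓝 0))
    (htop : Tendsto (fun x => φ x * x ^ c) atTop (𝓝 0))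
    (hint : IntegrableOn (fun x => dφ x * x ^ c + c * (φ x * x ^ (c - 1))) (Ioi 0)) :
    ∫ x in Ioi (0:ℝ), (dφ x * x ^ c + c * (φ x * x ^ (c - 1))) = 0 := by
  have hF0 : φ 0 * (0:ℝ) ^ c = 0 := by rw [hφ0, zero_mul]
  have hderiv : ∀ x ∈ Ioi (0:ℝ), HasDerivAt (fun x => φ x * x ^ c)
      (dφ x * x ^ c + c * (φ x * x ^ (c - 1))) x := by
    intro x hx
    have h := (hφ x).mul (Real.hasDerivAt_rpow_const (x := x) (p := c) (Or.inl hx.ne'))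
    exact h.congr_deriv (by ring)
  have hcont : ContinuousWithinAt (fun x => φ x * x ^ c) (Ici 0) 0 := by
    rw [ContinuousWithinAt, hF0]
    exact hcont0
  rw [integral_Ioi_of_hasDerivAt_of_tendsto hcont hderiv hint htop, hF0, sub_zero]
lemma rpow_split {x : ℝ} (hx : 0 < x) (b : ℝ) : x ^ b = x * x ^ (b - 1) := by
  have h : b - 1 + 1 = b := by ring
  rw [← h, Real.rpow_add_one hx.ne', h]
  ring

lemma continuousOn_rpow_Ioi (p : ℝ) : ContinuousOn (fun x : ℝ => x ^ p) (Ioi 0) := by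
  intro x hx
  exact (Real.continuousAt_rpow_const x p (Or.inl (ne_of_gt hx))).continuousWithinAt

lemma lemN_int {a θ : ℝ} (ha0 : 0 < a) (ha1 : a < 1) (hθ : 0 < θ) :
    IntegrableOn (fun x : ℝ => (1 - exp (-(θ * x))) * x ^ (-a - 1)) (Ioi 0) := by
  refine integrableOn_Ioi_of_bounds (C1 := θ) (C2 := 1) (p := -a) (q := -a - 1)
    (((continuous_const.sub (by continuity : Continuous fun x : ℝ => exp (-(θ * x)))).continuousOn.mul
      (continuousOn_rpow_Ioi _))) (by linarith) (by linarith) ?_ ?_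
  · intro x hx _
    have h1 : 0 ≤ 1 - exp (-(θ * x)) := aux_one_sub_exp_nonneg (by positivity)
    have h2 : 1 - exp (-(θ * x)) ≤ θ * x := aux_one_sub_exp_le (θ * x)
    rw [abs_of_nonneg (mul_nonneg h1 (Real.rpow_nonneg hx.le _))]
    calc (1 - exp (-(θ * x))) * x ^ (-a - 1) ≤ (θ * x) * x ^ (-a - 1) := by
          apply mul_le_mul_of_nonneg_right h2 (Real.rpow_nonneg hx.le _)
      _ = θ * x ^ (-a) := by rw [rpow_split hx (-a)]; ring
  · intro x hx
    have hx0 : (0:ℝ) < x := lt_of_lt_of_le one_pos hx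
    have h1 : 0 ≤ 1 - exp (-(θ * x)) := aux_one_sub_exp_nonneg (by positivity)
    have h2 : 1 - exp (-(θ * x)) ≤ 1 := by linarith [Real.exp_pos (-(θ * x))]
    rw [abs_of_nonneg (mul_nonneg h1 (Real.rpow_nonneg hx0.le _))]
    nlinarith [Real.rpow_nonneg hx0.le (-a - 1),
      mul_le_mul_of_nonneg_right h2 (Real.rpow_nonneg hx0.le (-a - 1))]

lemma lemN_val {a θ : ℝ} (ha0 : 0 < a) (ha1 : a < 1) (hθ : 0 < θ) :
    ∫ x in Ioi (0:ℝ), (1 - exp (-(θ * x))) * x ^ (-a - 1) = -Gamma (-a) * θ ^ a := by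
  have hφ : ∀ x : ℝ, HasDerivAt (fun x : ℝ => 1 - exp (-(θ * x))) (θ * exp (-(θ * x))) x := by
    intro x
    have h : HasDerivAt (fun x : ℝ => exp (-(θ * x))) (exp (-(θ * x)) * (-θ)) x := by
      exact (Real.hasDerivAt_exp _).comp x (by simpa using (hasDerivAt_id x).const_mul (-θ))
    have := (hasDerivAt_const x (1:ℝ)).sub h
    exact this.congr_deriv (by ring)
  have hA : IntegrableOn (fun x : ℝ => (θ * exp (-(θ * x))) * x ^ (-a)) (Ioi 0) := by
    refine IntegrableOn.congr_fun ((gammaIntegrable (s := 1 - a) (by linarith) hθ).const_mul θ)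
      (fun x hx => ?_) measurableSet_Ioi
    have h : (1 - a) - 1 = -a := by ring
    rw [h]; ring
  have hB := lemN_int ha0 ha1 hθ
  have hint : IntegrableOn (fun x : ℝ =>
      (θ * exp (-(θ * x))) * x ^ (-a) + (-a) * ((1 - exp (-(θ * x))) * x ^ (-a - 1))) (Ioi 0) := by
    refine IntegrableOn.congr_fun (hA.add (hB.const_mul (-a))) (fun x hx => rfl) measurableSet_Ioi
  have hzero : ∫ x in Ioi (0:ℝ),
      ((θ * exp (-(θ * x))) * x ^ (-a) + (-a) * ((1 - exp (-(θ * x))) * x ^ (-a - 1))) = 0 := by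
    have h0 : Tendsto (fun x => (1 - exp (-(θ * x))) * x ^ (-a)) (nhdsWithin 0 (Ici 0)) (𝓝 0) := by
      apply squeeze_zero' ?_ ?_ ((tendsto_rpow_nhdsWithin_zero (by linarith : (0:ℝ) < 1 - a)).const_mul θ |>.mono_right ?_)
      · filter_upwards [self_mem_nhdsWithin] with x (hx : x ∈ Ici 0)
        exact mul_nonneg (aux_one_sub_exp_nonneg (mul_nonneg hθ.le hx)) (Real.rpow_nonneg hx _)
      · filter_upwards [self_mem_nhdsWithin] with x (hx : x ∈ Ici 0)
        rcases eq_or_lt_of_le (mem_Ici.mp hx : (0:ℝ) ≤ x) with h | h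
        · simp [← h, Real.zero_rpow (by linarith : -a ≠ 0),
            Real.zero_rpow (by linarith : (1:ℝ) - a ≠ 0)]
        · calc (1 - exp (-(θ * x))) * x ^ (-a) ≤ (θ * x) * x ^ (-a) :=
              mul_le_mul_of_nonneg_right (aux_one_sub_exp_le _) (Real.rpow_nonneg hx _)
            _ = θ * x ^ (1 - a) := by rw [rpow_split h (1 - a)]; ring_nf
      · rw [mul_zero]
    have htop : Tendsto (fun x => (1 - exp (-(θ * x))) * x ^ (-a)) atTop (𝓝 0) := by
      apply squeeze_zero' ?_ ?_ (tendsto_rpow_neg_atTop ha0)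
      · filter_upwards [eventually_ge_atTop (0:ℝ)] with x hx
        exact mul_nonneg (aux_one_sub_exp_nonneg (by positivity)) (Real.rpow_nonneg hx _)
      · filter_upwards [eventually_ge_atTop (0:ℝ)] with x hx
        nlinarith [Real.rpow_nonneg hx (-a), Real.exp_pos (-(θ * x)),
          mul_le_mul_of_nonneg_right (by nlinarith [Real.exp_pos (-(θ*x))] : 1 - exp (-(θ * x)) ≤ 1) (Real.rpow_nonneg hx (-a))]
    have := ibp_Ioi (c := -a) hφ (by simp) h0 htop (by exact hint)
    simpa using this
  have hsplit : (∫ x in Ioi (0:ℝ), (θ * exp (-(θ * x))) * x ^ (-a))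
      + (∫ x in Ioi (0:ℝ), (-a) * ((1 - exp (-(θ * x))) * x ^ (-a - 1))) = 0 := by
    rw [← integral_add hA (hB.const_mul (-a))]
    exact hzero
  have hAval : ∫ x in Ioi (0:ℝ), ((θ * exp (-(θ * x))) * x ^ (-a))
      = θ * (Gamma (1 - a) * θ ^ (-(1 - a))) := by
    rw [← gammaIntegral (s := 1 - a) (by linarith) hθ, ← integral_const_mul]
    refine setIntegral_congr_fun measurableSet_Ioi (fun x hx => ?_)
    have h : (1 - a) - 1 = -a := by ring
    rw [h]; ring
  have hBval : ∫ x in Ioi (0:ℝ), ((-a) * ((1 - exp (-(θ * x))) * x ^ (-a - 1)))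
      = -a * ∫ x in Ioi (0:ℝ), ((1 - exp (-(θ * x))) * x ^ (-a - 1)) := by
    rw [← integral_const_mul]
  have hGamma : Gamma (1 - a) = -a * Gamma (-a) := by
    have h : (1:ℝ) - a = -a + 1 := by ring
    rw [h, Real.Gamma_add_one (by linarith : (-a) ≠ 0)]
  have hpow : θ * θ ^ (-(1 - a)) = θ ^ a := by
    rw [show -(1 - a) = a - 1 by ring, ← rpow_split hθ a]
  rw [hAval, hBval] at hsplit
  have ha' : a ≠ 0 := ne_of_gt ha0
  have hI : a * ∫ x in Ioi (0:ℝ), ((1 - exp (-(θ * x))) * x ^ (-a - 1))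
      = a * (-Gamma (-a) * θ ^ a) := by
    linear_combination (-1 : ℝ) * hsplit + (θ ^ (-(1 - a)) * θ) * hGamma
      + (-a * Gamma (-a)) * hpow
  exact mul_left_cancel₀ ha' hI
lemma lemK_int {a θ : ℝ} (ha1 : 1 < a) (ha2 : a < 2) (hθ : 0 < θ) :
    IntegrableOn (fun x : ℝ => (1 - exp (-(θ * x))) * x ^ (-a)) (Ioi 0) := by
  refine integrableOn_Ioi_of_bounds (C1 := θ) (C2 := 1) (p := 1 - a) (q := -a)
    (((continuous_const.sub (by continuity : Continuous fun x : ℝ => exp (-(θ * x)))).continuousOn.mul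
      (continuousOn_rpow_Ioi _))) (by linarith) (by linarith) ?_ ?_
  · intro x hx _
    have h1 : 0 ≤ 1 - exp (-(θ * x)) := aux_one_sub_exp_nonneg (by positivity)
    have h2 : 1 - exp (-(θ * x)) ≤ θ * x := aux_one_sub_exp_le (θ * x)
    rw [abs_of_nonneg (mul_nonneg h1 (Real.rpow_nonneg hx.le _))]
    calc (1 - exp (-(θ * x))) * x ^ (-a) ≤ (θ * x) * x ^ (-a) := by
          apply mul_le_mul_of_nonneg_right h2 (Real.rpow_nonneg hx.le _)
      _ = θ * x ^ (1 - a) := by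
          rw [rpow_split hx (1 - a), show (1:ℝ) - a - 1 = -a by ring]; ring
  · intro x hx
    have hx0 : (0:ℝ) < x := lt_of_lt_of_le one_pos hx
    have h1 : 0 ≤ 1 - exp (-(θ * x)) := aux_one_sub_exp_nonneg (by positivity)
    have h2 : 1 - exp (-(θ * x)) ≤ 1 := by linarith [Real.exp_pos (-(θ * x))]
    rw [abs_of_nonneg (mul_nonneg h1 (Real.rpow_nonneg hx0.le _))]
    nlinarith [Real.rpow_nonneg hx0.le (-a),
      mul_le_mul_of_nonneg_right h2 (Real.rpow_nonneg hx0.le (-a))]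

lemma lemK_val {a θ : ℝ} (ha1 : 1 < a) (ha2 : a < 2) (hθ : 0 < θ) :
    ∫ x in Ioi (0:ℝ), (1 - exp (-(θ * x))) * x ^ (-a) = -Gamma (1 - a) * θ ^ (a - 1) := by
  have hφ : ∀ x : ℝ, HasDerivAt (fun x : ℝ => 1 - exp (-(θ * x))) (θ * exp (-(θ * x))) x := by
    intro x
    have h : HasDerivAt (fun x : ℝ => exp (-(θ * x))) (exp (-(θ * x)) * (-θ)) x := by
      exact (Real.hasDerivAt_exp _).comp x (by simpa using (hasDerivAt_id x).const_mul (-θ))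
    have := (hasDerivAt_const x (1:ℝ)).sub h
    exact this.congr_deriv (by ring)
  have hA : IntegrableOn (fun x : ℝ => (θ * exp (-(θ * x))) * x ^ (1 - a)) (Ioi 0) := by
    refine IntegrableOn.congr_fun ((gammaIntegrable (s := 2 - a) (by linarith) hθ).const_mul θ)
      (fun x hx => ?_) measurableSet_Ioi
    rw [show (2:ℝ) - a - 1 = 1 - a by ring]; ring
  have hB' := lemK_int ha1 ha2 hθ
  have hB : IntegrableOn (fun x : ℝ => (1 - exp (-(θ * x))) * x ^ (1 - a - 1)) (Ioi 0) := by
    rw [show (1:ℝ) - a - 1 = -a by ring]; exact hB'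
  have hint : IntegrableOn (fun x : ℝ =>
      (θ * exp (-(θ * x))) * x ^ (1 - a) + (1 - a) * ((1 - exp (-(θ * x))) * x ^ (1 - a - 1)))
      (Ioi 0) := by
    refine IntegrableOn.congr_fun (hA.add (hB.const_mul (1 - a))) (fun x hx => rfl)
      measurableSet_Ioi
  have hzero : ∫ x in Ioi (0:ℝ),
      ((θ * exp (-(θ * x))) * x ^ (1 - a)
        + (1 - a) * ((1 - exp (-(θ * x))) * x ^ (1 - a - 1))) = 0 := by
    have h0 : Tendsto (fun x => (1 - exp (-(θ * x))) * x ^ (1 - a)) (nhdsWithin 0 (Ici 0)) (𝓝 0) := by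
      apply squeeze_zero' ?_ ?_ ((tendsto_rpow_nhdsWithin_zero (by linarith : (0:ℝ) < 2 - a)).const_mul θ |>.mono_right ?_)
      · filter_upwards [self_mem_nhdsWithin] with x (hx : x ∈ Ici 0)
        exact mul_nonneg (aux_one_sub_exp_nonneg (mul_nonneg hθ.le hx)) (Real.rpow_nonneg hx _)
      · filter_upwards [self_mem_nhdsWithin] with x (hx : x ∈ Ici 0)
        rcases eq_or_lt_of_le (mem_Ici.mp hx : (0:ℝ) ≤ x) with h | h
        · simp [← h, Real.zero_rpow (by linarith : (1:ℝ) - a ≠ 0),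
            Real.zero_rpow (by linarith : (2:ℝ) - a ≠ 0)]
        · calc (1 - exp (-(θ * x))) * x ^ (1 - a) ≤ (θ * x) * x ^ (1 - a) :=
              mul_le_mul_of_nonneg_right (aux_one_sub_exp_le _) (Real.rpow_nonneg hx _)
            _ = θ * x ^ (2 - a) := by
              rw [rpow_split h (2 - a), show (2:ℝ) - a - 1 = 1 - a by ring]; ring
      · rw [mul_zero]
    have htop : Tendsto (fun x => (1 - exp (-(θ * x))) * x ^ (1 - a)) atTop (𝓝 0) := by
      have hbase := tendsto_rpow_neg_atTop (by linarith : (0:ℝ) < a - 1)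
      rw [show -(a - 1) = 1 - a by ring] at hbase
      apply squeeze_zero' ?_ ?_ hbase
      · filter_upwards [eventually_ge_atTop (0:ℝ)] with x hx
        exact mul_nonneg (aux_one_sub_exp_nonneg (by positivity)) (Real.rpow_nonneg hx _)
      · filter_upwards [eventually_ge_atTop (0:ℝ)] with x hx
        nlinarith [Real.rpow_nonneg hx (1 - a), Real.exp_pos (-(θ * x)),
          mul_le_mul_of_nonneg_right (by nlinarith [Real.exp_pos (-(θ*x))] : 1 - exp (-(θ * x)) ≤ 1) (Real.rpow_nonneg hx (1 - a))]
    have := ibp_Ioi (c := 1 - a) hφ (by simp) h0 htop (by exact hint)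
    simpa using this
  have hsplit : (∫ x in Ioi (0:ℝ), (θ * exp (-(θ * x))) * x ^ (1 - a))
      + (∫ x in Ioi (0:ℝ), (1 - a) * ((1 - exp (-(θ * x))) * x ^ (1 - a - 1))) = 0 := by
    rw [← integral_add hA (hB.const_mul (1 - a))]
    exact hzero
  have hAval : ∫ x in Ioi (0:ℝ), ((θ * exp (-(θ * x))) * x ^ (1 - a))
      = θ * (Gamma (2 - a) * θ ^ (-(2 - a))) := by
    rw [← gammaIntegral (s := 2 - a) (by linarith) hθ, ← integral_const_mul]
    refine setIntegral_congr_fun measurableSet_Ioi (fun x hx => ?_)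
    rw [show (2:ℝ) - a - 1 = 1 - a by ring]; ring
  have hBval : ∫ x in Ioi (0:ℝ), ((1 - a) * ((1 - exp (-(θ * x))) * x ^ (1 - a - 1)))
      = (1 - a) * ∫ x in Ioi (0:ℝ), ((1 - exp (-(θ * x))) * x ^ (-a)) := by
    rw [← integral_const_mul, show (1:ℝ) - a - 1 = -a by ring]
  have hGamma : Gamma (2 - a) = (1 - a) * Gamma (1 - a) := by
    have h : (2:ℝ) - a = (1 - a) + 1 := by ring
    rw [h, Real.Gamma_add_one (sub_ne_zero.mpr (ne_of_lt ha1))]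
  have hpow : θ * θ ^ (-(2 - a)) = θ ^ (a - 1) := by
    rw [show -(2 - a) = (a - 1) - 1 by ring, ← rpow_split hθ (a - 1)]
  rw [hAval, hBval] at hsplit
  have ha' : a - 1 ≠ 0 := sub_ne_zero.mpr (ne_of_gt ha1)
  have hI : (a - 1) * ∫ x in Ioi (0:ℝ), ((1 - exp (-(θ * x))) * x ^ (-a))
      = (a - 1) * (-Gamma (1 - a) * θ ^ (a - 1)) := by
    linear_combination (-1 : ℝ) * hsplit + (θ * θ ^ (-(2 - a))) * hGamma
      + ((1 - a) * Gamma (1 - a)) * hpow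
  exact mul_left_cancel₀ ha' hI
lemma lemM_int {a θ : ℝ} (ha1 : 1 < a) (ha2 : a < 2) (hθ : 0 < θ) :
    IntegrableOn (fun x : ℝ => (exp (-(θ * x)) - 1 + θ * x) * x ^ (-a - 1)) (Ioi 0) := by
  refine integrableOn_Ioi_of_bounds (C1 := θ ^ 2 / 2) (C2 := θ) (p := 1 - a) (q := -a)
    (((by continuity : Continuous fun x : ℝ => exp (-(θ * x)) - 1 + θ * x).continuousOn.mul
      (continuousOn_rpow_Ioi _))) (by linarith) (by linarith) ?_ ?_
  · intro x hx _
    have h1 : 0 ≤ exp (-(θ * x)) - 1 + θ * x := aux_exp_sub_nonneg (θ * x)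
    have h2 : exp (-(θ * x)) - 1 + θ * x ≤ (θ * x) ^ 2 / 2 := aux_exp_quad (by positivity)
    rw [abs_of_nonneg (mul_nonneg h1 (Real.rpow_nonneg hx.le _))]
    calc (exp (-(θ * x)) - 1 + θ * x) * x ^ (-a - 1)
        ≤ ((θ * x) ^ 2 / 2) * x ^ (-a - 1) := by
          apply mul_le_mul_of_nonneg_right h2 (Real.rpow_nonneg hx.le _)
      _ = θ ^ 2 / 2 * x ^ (1 - a) := by
          rw [rpow_split hx (1 - a), show (1:ℝ) - a - 1 = -a by ring, rpow_split hx (-a)]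
          ring
  · intro x hx
    have hx0 : (0:ℝ) < x := lt_of_lt_of_le one_pos hx
    have h1 : 0 ≤ exp (-(θ * x)) - 1 + θ * x := aux_exp_sub_nonneg (θ * x)
    have h2 : exp (-(θ * x)) - 1 + θ * x ≤ θ * x := aux_exp_sub_le (by positivity)
    rw [abs_of_nonneg (mul_nonneg h1 (Real.rpow_nonneg hx0.le _))]
    calc (exp (-(θ * x)) - 1 + θ * x) * x ^ (-a - 1)
        ≤ (θ * x) * x ^ (-a - 1) := by
          apply mul_le_mul_of_nonneg_right h2 (Real.rpow_nonneg hx0.le _)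
      _ = θ * x ^ (-a) := by rw [rpow_split hx0 (-a)]; ring

lemma lemM_val {a θ : ℝ} (ha1 : 1 < a) (ha2 : a < 2) (hθ : 0 < θ) :
    ∫ x in Ioi (0:ℝ), (exp (-(θ * x)) - 1 + θ * x) * x ^ (-a - 1) = Gamma (-a) * θ ^ a := by
  have hφ : ∀ x : ℝ, HasDerivAt (fun x : ℝ => exp (-(θ * x)) - 1 + θ * x)
      (θ * (1 - exp (-(θ * x)))) x := by
    intro x
    have h : HasDerivAt (fun x : ℝ => exp (-(θ * x))) (exp (-(θ * x)) * (-θ)) x := by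
      exact (Real.hasDerivAt_exp _).comp x (by simpa using (hasDerivAt_id x).const_mul (-θ))
    have h2 : HasDerivAt (fun x : ℝ => θ * x) θ x := by
      simpa using (hasDerivAt_id x).const_mul θ
    have := (h.sub_const 1).add h2
    exact this.congr_deriv (by ring)
  have hA : IntegrableOn (fun x : ℝ => (θ * (1 - exp (-(θ * x)))) * x ^ (-a)) (Ioi 0) := by
    refine IntegrableOn.congr_fun ((lemK_int ha1 ha2 hθ).const_mul θ)
      (fun x hx => by ring) measurableSet_Ioi
  have hB := lemM_int ha1 ha2 hθ
  have hint : IntegrableOn (fun x : ℝ =>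
      (θ * (1 - exp (-(θ * x)))) * x ^ (-a)
        + (-a) * ((exp (-(θ * x)) - 1 + θ * x) * x ^ (-a - 1))) (Ioi 0) := by
    refine IntegrableOn.congr_fun (hA.add (hB.const_mul (-a))) (fun x hx => rfl)
      measurableSet_Ioi
  have hzero : ∫ x in Ioi (0:ℝ),
      ((θ * (1 - exp (-(θ * x)))) * x ^ (-a)
        + (-a) * ((exp (-(θ * x)) - 1 + θ * x) * x ^ (-a - 1))) = 0 := by
    have h0 : Tendsto (fun x => (exp (-(θ * x)) - 1 + θ * x) * x ^ (-a))
        (nhdsWithin 0 (Ici 0)) (𝓝 0) := by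
      apply squeeze_zero' ?_ ?_ ((tendsto_rpow_nhdsWithin_zero (by linarith : (0:ℝ) < 2 - a)).const_mul (θ ^ 2 / 2) |>.mono_right ?_)
      · filter_upwards [self_mem_nhdsWithin] with x (hx : x ∈ Ici 0)
        exact mul_nonneg (aux_exp_sub_nonneg _) (Real.rpow_nonneg hx _)
      · filter_upwards [self_mem_nhdsWithin] with x (hx : x ∈ Ici 0)
        rcases eq_or_lt_of_le (mem_Ici.mp hx : (0:ℝ) ≤ x) with h | h
        · simp [← h, Real.zero_rpow (by linarith : -a ≠ 0),
            Real.zero_rpow (by linarith : (2:ℝ) - a ≠ 0)]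
        · calc (exp (-(θ * x)) - 1 + θ * x) * x ^ (-a)
              ≤ ((θ * x) ^ 2 / 2) * x ^ (-a) :=
              mul_le_mul_of_nonneg_right (aux_exp_quad (by positivity)) (Real.rpow_nonneg hx _)
            _ = θ ^ 2 / 2 * x ^ (2 - a) := by
              rw [rpow_split h (2 - a), show (2:ℝ) - a - 1 = 1 - a by ring,
                rpow_split h (1 - a), show (1:ℝ) - a - 1 = -a by ring]
              ring
      · rw [mul_zero]
    have htop : Tendsto (fun x => (exp (-(θ * x)) - 1 + θ * x) * x ^ (-a)) atTop (𝓝 0) := by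
      have hbase := (tendsto_rpow_neg_atTop (by linarith : (0:ℝ) < a - 1)).const_mul θ
      rw [show -(a - 1) = 1 - a by ring, mul_zero] at hbase
      apply squeeze_zero' ?_ ?_ hbase
      · filter_upwards [eventually_ge_atTop (0:ℝ)] with x hx
        exact mul_nonneg (aux_exp_sub_nonneg _) (Real.rpow_nonneg hx _)
      · filter_upwards [eventually_gt_atTop (0:ℝ)] with x hx
        calc (exp (-(θ * x)) - 1 + θ * x) * x ^ (-a)
            ≤ (θ * x) * x ^ (-a) :=
            mul_le_mul_of_nonneg_right (aux_exp_sub_le (by positivity)) (Real.rpow_nonneg hx.le _)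
          _ = θ * x ^ (1 - a) := by
            rw [rpow_split hx (1 - a), show (1:ℝ) - a - 1 = -a by ring]; ring
    have := ibp_Ioi (c := -a) hφ (by simp) h0 htop (by exact hint)
    simpa using this
  have hsplit : (∫ x in Ioi (0:ℝ), (θ * (1 - exp (-(θ * x)))) * x ^ (-a))
      + (∫ x in Ioi (0:ℝ), (-a) * ((exp (-(θ * x)) - 1 + θ * x) * x ^ (-a - 1))) = 0 := by
    rw [← integral_add hA (hB.const_mul (-a))]
    exact hzero
  have hAval : ∫ x in Ioi (0:ℝ), ((θ * (1 - exp (-(θ * x)))) * x ^ (-a))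
      = θ * (-Gamma (1 - a) * θ ^ (a - 1)) := by
    rw [← lemK_val ha1 ha2 hθ, ← integral_const_mul]
    exact setIntegral_congr_fun measurableSet_Ioi (fun x hx => by ring)
  have hBval : ∫ x in Ioi (0:ℝ), ((-a) * ((exp (-(θ * x)) - 1 + θ * x) * x ^ (-a - 1)))
      = -a * ∫ x in Ioi (0:ℝ), ((exp (-(θ * x)) - 1 + θ * x) * x ^ (-a - 1)) := by
    rw [← integral_const_mul]
  have hGamma : Gamma (1 - a) = -a * Gamma (-a) := by
    have h : (1:ℝ) - a = -a + 1 := by ring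
    rw [h, Real.Gamma_add_one (by intro h'; rw [neg_eq_zero] at h'; exact (by linarith : a ≠ 0) h')]
  have hpow : θ * θ ^ (a - 1) = θ ^ a := (rpow_split hθ a).symm
  rw [hAval, hBval] at hsplit
  have ha' : a ≠ 0 := by linarith
  have hI : a * ∫ x in Ioi (0:ℝ), ((exp (-(θ * x)) - 1 + θ * x) * x ^ (-a - 1))
      = a * (Gamma (-a) * θ ^ a) := by
    linear_combination (-1 : ℝ) * hsplit + (-(θ * θ ^ (a - 1))) * hGamma
      + (a * Gamma (-a)) * hpow
  exact mul_left_cancel₀ ha' hI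
lemma lemHalf {a lam mu : ℝ} (ha0 : 0 < a) (ha2 : a < 2) (ha1 : a ≠ 1)
    (hl : 0 < lam) (hm : 0 < mu) :
    IntegrableOn (fun x : ℝ =>
      (-(lam - mu) * x * exp (-(lam * x)) - exp (-(lam * x)) + exp (-(mu * x))) * x ^ (-a - 1))
      (Ioi 0) ∧
    ∫ x in Ioi (0:ℝ),
      (-(lam - mu) * x * exp (-(lam * x)) - exp (-(lam * x)) + exp (-(mu * x))) * x ^ (-a - 1)
      = Gamma (-a) * ((a - 1) * lam ^ a - a * mu * lam ^ (a - 1) + mu ^ a) := by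
  have hG : Gamma (1 - a) = -a * Gamma (-a) := by
    have h : (1:ℝ) - a = -a + 1 := by ring
    rw [h, Real.Gamma_add_one (by intro h'; rw [neg_eq_zero] at h'; exact (ne_of_gt ha0) h')]
  have hp2 : lam ^ a = lam * lam ^ (a - 1) := rpow_split hl a
  rcases lt_or_gt_of_ne ha1 with h | h
  · -- a < 1
    have i1 := lemN_int ha0 h hl
    have i2 := lemN_int ha0 h hm
    have i3 := (gammaIntegrable (s := 1 - a) (by linarith) hl).const_mul (lam - mu)
    have hEq : EqOn (fun x : ℝ =>
        ((1 - exp (-(lam * x))) * x ^ (-a - 1) - (1 - exp (-(mu * x))) * x ^ (-a - 1))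
          - (lam - mu) * (x ^ (1 - a - 1) * exp (-(lam * x))))
        (fun x : ℝ =>
          (-(lam - mu) * x * exp (-(lam * x)) - exp (-(lam * x)) + exp (-(mu * x))) * x ^ (-a - 1))
        (Ioi 0) := by
      intro x hx
      simp only
      rw [show (1:ℝ) - a - 1 = -a by ring, rpow_split hx (-a)]
      ring
    refine ⟨IntegrableOn.congr_fun ((i1.sub i2).sub i3) hEq measurableSet_Ioi, ?_⟩
    have hval : ∫ x in Ioi (0:ℝ),
        (-(lam - mu) * x * exp (-(lam * x)) - exp (-(lam * x)) + exp (-(mu * x))) * x ^ (-a - 1)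
        = (-Gamma (-a) * lam ^ a - -Gamma (-a) * mu ^ a)
          - (lam - mu) * (Gamma (1 - a) * lam ^ (-(1 - a))) := by
      have i12 : IntegrableOn (fun x : ℝ =>
          (1 - exp (-(lam * x))) * x ^ (-a - 1) - (1 - exp (-(mu * x))) * x ^ (-a - 1))
          (Ioi 0) := i1.sub i2
      rw [← setIntegral_congr_fun measurableSet_Ioi hEq,
        integral_sub i12 i3, integral_sub i1 i2, integral_const_mul,
        lemN_val ha0 h hl, lemN_val ha0 h hm, gammaIntegral (by linarith) hl]
    rw [hval, show -((1:ℝ) - a) = a - 1 by ring, hG, hp2]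
    ring
  · -- 1 < a
    have i1 := lemM_int h ha2 hm
    have i2 := lemM_int h ha2 hl
    have i3 := (lemK_int h ha2 hl).const_mul (lam - mu)
    have hEq : EqOn (fun x : ℝ =>
        ((exp (-(mu * x)) - 1 + mu * x) * x ^ (-a - 1)
          - (exp (-(lam * x)) - 1 + lam * x) * x ^ (-a - 1))
          + (lam - mu) * ((1 - exp (-(lam * x))) * x ^ (-a)))
        (fun x : ℝ =>
          (-(lam - mu) * x * exp (-(lam * x)) - exp (-(lam * x)) + exp (-(mu * x))) * x ^ (-a - 1))
        (Ioi 0) := by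
      intro x hx
      simp only
      rw [rpow_split hx (-a)]
      ring
    refine ⟨IntegrableOn.congr_fun ((i1.sub i2).add i3) hEq measurableSet_Ioi, ?_⟩
    have hval : ∫ x in Ioi (0:ℝ),
        (-(lam - mu) * x * exp (-(lam * x)) - exp (-(lam * x)) + exp (-(mu * x))) * x ^ (-a - 1)
        = (Gamma (-a) * mu ^ a - Gamma (-a) * lam ^ a)
          + (lam - mu) * (-Gamma (1 - a) * lam ^ (a - 1)) := by
      have i12 : IntegrableOn (fun x : ℝ =>
          (exp (-(mu * x)) - 1 + mu * x) * x ^ (-a - 1)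
            - (exp (-(lam * x)) - 1 + lam * x) * x ^ (-a - 1)) (Ioi 0) := i1.sub i2
      rw [← setIntegral_congr_fun measurableSet_Ioi hEq,
        integral_add i12 i3, integral_sub i1 i2, integral_const_mul,
        lemM_val h ha2 hm, lemM_val h ha2 hl, lemK_val h ha2 hl]
    rw [hval, hG, hp2]
    ring

lemma integrableOn_Iio_of_neg {f : ℝ → ℝ}
    (h : IntegrableOn (fun x => f (-x)) (Ioi (0:ℝ))) : IntegrableOn f (Iio 0) := by
  have hm : volume.restrict (Iio (0:ℝ))
      = Measure.map (fun x : ℝ => -x) (volume.restrict (Ioi 0)) := by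
    have hpre : (Neg.neg ⁻¹' (Iio (0:ℝ)) : Set ℝ) = Ioi 0 := by ext y; simp
    conv_lhs => rw [← Measure.map_neg_eq_self (volume : Measure ℝ)]
    rw [measurableEmbedding_neg.restrict_map, hpre]
  rw [IntegrableOn, hm, measurableEmbedding_neg.integrable_map_iff]
  exact h

lemma integral_Iio_eq_neg (f : ℝ → ℝ) :
    ∫ x in Iio (0:ℝ), f x = ∫ x in Ioi (0:ℝ), f (-x) := by
  rw [integral_comp_neg_Ioi, neg_zero, integral_Iic_eq_integral_Iio]

/-- The GTS (generalized tempered stable) Lévy density with parameters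
`(a₊, a₋, C₊, C₋, θ₊, θ₋)`. -/
noncomputable def gtsDensity (ap am Cp Cm tp tm : ℝ) (x : ℝ) : ℝ :=
  if 0 < x then Cp * exp (-(tp * x)) * x ^ (-ap - 1)
  else if x < 0 then Cm * exp (-(tm * |x|)) * |x| ^ (-am - 1)
  else 0

/-- Kullback–Leibler divergence between two equivalent-martingale GTS processes. -/
theorem gts_kl_divergence (ap am Cp Cm lp lm mp mm T : ℝ)
    (hap : ap ∈ Ioo (0:ℝ) 2) (hap1 : ap ≠ 1)
    (ham : am ∈ Ioo (0:ℝ) 2) (ham1 : am ≠ 1)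
    (hCp : 0 < Cp) (hCm : 0 < Cm) (hlp : 0 < lp) (hlm : 0 < lm)
    (hmp : 0 < mp) (hmm : 0 < mm) (hT : 0 < T)
    (r : ℝ → ℝ)
    (hrp : ∀ x : ℝ, 0 < x → r x = exp (-((lp - mp) * x)))
    (hrm : ∀ x : ℝ, x < 0 → r x = exp (-((lm - mm) * |x|))) :
    Integrable (fun x : ℝ =>
      (r x * Real.log (r x) - r x + 1) * gtsDensity ap am Cp Cm mp mm x) ∧
    T * ∫ x : ℝ, (r x * Real.log (r x) - r x + 1) * gtsDensity ap am Cp Cm mp mm x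
      = T * Cp * Gamma (-ap) * ((ap - 1) * lp ^ ap - ap * mp * lp ^ (ap - 1) + mp ^ ap)
        + T * Cm * Gamma (-am) * ((am - 1) * lm ^ am - am * mm * lm ^ (am - 1) + mm ^ am) := by
  obtain ⟨hap0, hap2⟩ := hap
  obtain ⟨ham0, ham2⟩ := ham
  set f : ℝ → ℝ := fun x => (r x * Real.log (r x) - r x + 1) * gtsDensity ap am Cp Cm mp mm x
    with hf
  -- positive side
  have hP := lemHalf hap0 hap2 hap1 hlp hmp
  have hEqP : EqOn (fun x : ℝ =>
      Cp * ((-(lp - mp) * x * exp (-(lp * x)) - exp (-(lp * x)) + exp (-(mp * x)))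
        * x ^ (-ap - 1))) f (Ioi 0) := by
    intro x hx
    have hx0 : (0:ℝ) < x := hx
    have hgts : gtsDensity ap am Cp Cm mp mm x = Cp * exp (-(mp * x)) * x ^ (-ap - 1) := by
      rw [gtsDensity, if_pos hx0]
    have hexp : exp (-(lp * x)) = exp (-((lp - mp) * x)) * exp (-(mp * x)) := by
      rw [← Real.exp_add]; congr 1; ring
    simp only [hf, hgts, hrp x hx0, Real.log_exp, hexp]
    ring
  have hIntP : IntegrableOn f (Ioi 0) :=
    IntegrableOn.congr_fun (hP.1.const_mul Cp) hEqP measurableSet_Ioi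
  have hValP : ∫ x in Ioi (0:ℝ), f x
      = Cp * (Gamma (-ap) * ((ap - 1) * lp ^ ap - ap * mp * lp ^ (ap - 1) + mp ^ ap)) := by
    rw [← setIntegral_congr_fun measurableSet_Ioi hEqP, integral_const_mul, hP.2]
  -- negative side
  have hM := lemHalf ham0 ham2 ham1 hlm hmm
  have hEqM : EqOn (fun x : ℝ =>
      Cm * ((-(lm - mm) * x * exp (-(lm * x)) - exp (-(lm * x)) + exp (-(mm * x)))
        * x ^ (-am - 1))) (fun x => f (-x)) (Ioi 0) := by
    intro x hx
    have hx0 : (0:ℝ) < x := hx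
    have habs : |(-x : ℝ)| = x := by rw [abs_neg, abs_of_pos hx0]
    have hgts : gtsDensity ap am Cp Cm mp mm (-x) = Cm * exp (-(mm * x)) * x ^ (-am - 1) := by
      rw [gtsDensity, if_neg (by linarith : ¬ (0:ℝ) < -x), if_pos (by linarith : (-x:ℝ) < 0),
        habs]
    have hr : r (-x) = exp (-((lm - mm) * x)) := by rw [hrm (-x) (by linarith), habs]
    have hexp : exp (-(lm * x)) = exp (-((lm - mm) * x)) * exp (-(mm * x)) := by
      rw [← Real.exp_add]; congr 1; ring
    simp only [hf, hgts, hr, Real.log_exp, hexp]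
    ring
  have hIntM : IntegrableOn f (Iio 0) :=
    integrableOn_Iio_of_neg
      (IntegrableOn.congr_fun (hM.1.const_mul Cm) hEqM measurableSet_Ioi)
  have hValM : ∫ x in Iio (0:ℝ), f x
      = Cm * (Gamma (-am) * ((am - 1) * lm ^ am - am * mm * lm ^ (am - 1) + mm ^ am)) := by
    rw [integral_Iio_eq_neg, ← setIntegral_congr_fun measurableSet_Ioi hEqM,
      integral_const_mul, hM.2]
  -- split into indicators
  have hsplitf : f = (Ioi (0:ℝ)).indicator f + (Iio (0:ℝ)).indicator f := by
    funext x
    rcases lt_trichotomy x 0 with hx | hx | hx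
    · simp [Set.indicator_apply, mem_Ioi, mem_Iio, hx, not_lt.mpr hx.le]
    · subst hx
      simp [Set.indicator_apply, hf, gtsDensity]
    · simp [Set.indicator_apply, mem_Ioi, mem_Iio, hx, not_lt.mpr hx.le]
  have hi1 : Integrable ((Ioi (0:ℝ)).indicator f) :=
    (integrable_indicator_iff measurableSet_Ioi).mpr hIntP
  have hi2 : Integrable ((Iio (0:ℝ)).indicator f) :=
    (integrable_indicator_iff measurableSet_Iio).mpr hIntM
  have hInt : Integrable f := by
    rw [hsplitf]; exact hi1.add hi2
  refine ⟨hInt, ?_⟩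
  have hIsum : ∫ x, f x = (∫ x in Ioi (0:ℝ), f x) + ∫ x in Iio (0:ℝ), f x := by
    conv_lhs => rw [hsplitf]
    rw [show ((Ioi (0:ℝ)).indicator f + (Iio (0:ℝ)).indicator f)
      = fun x => (Ioi (0:ℝ)).indicator f x + (Iio (0:ℝ)).indicator f x from rfl]
    rw [integral_add hi1 hi2, integral_indicator measurableSet_Ioi,
      integral_indicator measurableSet_Iio]
  rw [hIsum, hValP, hValM]
  ring
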